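/- arXiv:1703.00718 — 2 statements merged into one kernel-verified Lean document; each statement's English description precedes it below -/
import Mathlib

section
/- Let K/F be a finite Galois field extension, σ ∈ Gal(K/F) of order n with Fix(σ) = F, and suppose σ commutes with every τ ∈ Gal(K/F). Let f(t) = t^m − Σ_{i=0}^{m−1} a_i t^i ∈ K[t;σ] be not invariant with a_{m−1} ∈ F^×, and let n ≥ m−1. If for every τ ∈ Gal(K/F) with τ ≠ id there exists some index i ≠ m−1 with a_i ≠ 0 and τ(a_i) ≠ a_i, then Aut_F(S_f) = {id}. If instead all coefficients of f lie in F (f ∈ F[t;σ]), then every automorphism of S_f equals H_{τ,1} for some τ ∈ Gal(K/F), and Aut_F(S_f) ≅ Gal(K/F). -/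
/-! ## The Petit algebra `S_f = K[t;σ]/K[t;σ]f`

For a twisted polynomial ring `R = K[t;σ]` (multiplication determined by `t·a = σ(a)·t`)
and the monic skew polynomial `f(t) = t^m - Σ_{i<m} a_i t^i` (encoded by its coefficient
vector `a : Fin m → K`), the Petit algebra `S_f` is realised on coefficient vectors
`Fin m → K` (the polynomials of degree `< m`), with multiplication `g ∘ h = (gh) mod_r f`. -/

/-- The remainder of `t^s` after right division by `f(t) = t^m - Σ_{i<m} a_i t^i`:
for `s < m` it is `t^s` itself, and for `s ≥ m` one uses
`t^s ≡ Σ_i σ^{s-m}(a_i) t^{s-m+i} (mod R·f)`. -/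
noncomputable def tred {K : Type*} [Field K] (σ : K → K) (m : ℕ) (a : Fin m → K) (s : ℕ) :
    Fin m → K :=
  if _h : s < m then (fun i => if (i : ℕ) = s then (1 : K) else 0)
  else ∑ i : Fin m, σ^[s - m] (a i) • tred σ m a (s - m + (i : ℕ))
termination_by s
decreasing_by
  have hi := i.isLt
  omega

/-- The multiplication `g ∘ h = (gh) mod_r f` of the Petit algebra `S_f`. -/
noncomputable def pmul {K : Type*} [Field K] (σ : K → K) {m : ℕ} (a : Fin m → K)
    (x y : Fin m → K) : Fin m → K :=
  ∑ i : Fin m, ∑ j : Fin m, (x i * σ^[(i : ℕ)] (y j)) • tred σ m a ((i : ℕ) + (j : ℕ))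

/-- The unit element `1` of `S_f`. -/
noncomputable def pone (K : Type*) [Field K] (m : ℕ) : Fin m → K :=
  fun i => if (i : ℕ) = 0 then 1 else 0

/-- The element `t` of `S_f`. -/
noncomputable def tvec (K : Type*) [Field K] (m : ℕ) : Fin m → K :=
  fun i => if (i : ℕ) = 1 then 1 else 0

/-- The canonical copy of `c ∈ K` inside `S_f`. -/
noncomputable def iota (K : Type*) [Field K] (m : ℕ) (c : K) : Fin m → K :=
  fun i => if (i : ℕ) = 0 then c else 0

/-- `S_f` is associative; by Petit's theorem this holds if and only if `f` is
invariant (i.e. `R·f` is a two-sided ideal of `R = K[t;σ]`). -/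
def PAssoc {K : Type*} [Field K] (σ : K → K) {m : ℕ} (a : Fin m → K) : Prop :=
  ∀ x y z : Fin m → K, pmul σ a (pmul σ a x y) z = pmul σ a x (pmul σ a y z)

/-- `H` is an automorphism of the algebra `S_f` over `F = Fix(σ)`: an `F`-linear
bijection preserving the multiplication and the unit. -/
structure IsPetitAut {K : Type*} [Field K] (σ : K → K) {m : ℕ} (a : Fin m → K)
    (H : (Fin m → K) → (Fin m → K)) : Prop where
  bijective : Function.Bijective H
  map_add : ∀ x y, H (x + y) = H x + H y
  map_smul : ∀ c : K, σ c = c → ∀ x, H (c • x) = c • H x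
  map_mul : ∀ x y, H (pmul σ a x y) = pmul σ a (H x) (H y)
  map_one : H (pone K m) = pone K m

/-- `H` is an inner automorphism `x ↦ (c_l ∘ x) ∘ c` of `S_f`, where `c_l` is a
left inverse of `c`. -/
def IsInnerPetit {K : Type*} [Field K] (σ : K → K) {m : ℕ} (a : Fin m → K)
    (H : (Fin m → K) → (Fin m → K)) : Prop :=
  ∃ c cl : Fin m → K, pmul σ a cl c = pone K m ∧
    ∀ x, H x = pmul σ a (pmul σ a cl x) c

/-- The map `H_{τ,k} : Σ x_i t^i ↦ τ(x_0) + Σ_{i≥1} τ(x_i)·(Π_{l<i} σ^l(k))·t^i`. -/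
noncomputable def Hmap {K : Type*} [Field K] (σ τ : K → K) {m : ℕ} (k : K)
    (x : Fin m → K) : Fin m → K :=
  fun i => τ (x i) * ∏ l ∈ Finset.range (i : ℕ), σ^[l] k

section AuxPetit

variable {F K : Type*} [Field F] [Field K] [Algebra F K]

lemma iter_eq (σ : K ≃ₐ[F] K) (s : ℕ) (x : K) : (⇑σ)^[s] x = (σ ^ s) x := by
  induction s generalizing x with
  | zero => simp
  | succ n ih => rw [Function.iterate_succ_apply, pow_succ]; simp [-AlgEquiv.coe_pow, ih]

variable (σ : K ≃ₐ[F] K) {m : ℕ} (a : Fin m → K)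

lemma tred_lt {s : ℕ} (h : s < m) :
    tred (⇑σ) m a s = fun i : Fin m => if (i : ℕ) = s then (1 : K) else 0 := by
  rw [tred.eq_def]; exact dif_pos h

lemma tred_ge {s : ℕ} (h : m ≤ s) :
    tred (⇑σ) m a s = ∑ i : Fin m, (⇑σ)^[s - m] (a i) • tred (⇑σ) m a (s - m + (i : ℕ)) := by
  rw [tred.eq_def]; exact dif_neg (by omega)

lemma decomp (x : Fin m → K) : ∑ i : Fin m, x i • tred (⇑σ) m a (i : ℕ) = x := by
  funext j
  rw [Finset.sum_apply]
  rw [Finset.sum_eq_single j]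
  · simp [tred_lt σ a j.isLt]
  · intro i _ hij
    simp [tred_lt σ a i.isLt, Fin.val_eq_val, hij, Ne.symm hij]
  · simp

lemma it_add_apply (s t : ℕ) (x : K) : (⇑σ)^[s + t] x = (⇑σ)^[s] ((⇑σ)^[t] x) := by
  rw [Function.iterate_add_apply]

lemma tred_shift (u s : ℕ) :
    tred (⇑σ) m a (s + u)
      = ∑ i : Fin m, (⇑σ)^[s] (tred (⇑σ) m a u i) • tred (⇑σ) m a (s + (i : ℕ)) := by
  induction u using Nat.strong_induction_on with
  | _ u IH =>
  by_cases hu : u < m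
  · rw [tred_lt σ a hu]
    rw [Finset.sum_eq_single ⟨u, hu⟩]
    · simp [iter_eq]
    · intro i _ hij
      have : (i : ℕ) ≠ u := by simpa [Fin.ext_iff] using hij
      simp [this, iter_eq]
    · simp
  · have hmu : m ≤ u := le_of_not_gt hu
    rw [tred_ge σ a (show m ≤ s + u by omega), tred_ge σ a hmu]
    have h1 : s + u - m = s + (u - m) := by omega
    calc ∑ p : Fin m, (⇑σ)^[s + u - m] (a p) • tred (⇑σ) m a (s + u - m + (p : ℕ))
        = ∑ p : Fin m, ∑ i : Fin m,
            ((⇑σ)^[s] ((⇑σ)^[u - m] (a p)) * (⇑σ)^[s] (tred (⇑σ) m a (u - m + (p : ℕ)) i))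
              • tred (⇑σ) m a (s + (i : ℕ)) := by
          refine Finset.sum_congr rfl (fun p _ => ?_)
          rw [h1, add_assoc, IH (u - m + (p : ℕ)) (by have := p.isLt; omega), Finset.smul_sum]
          refine Finset.sum_congr rfl (fun i _ => ?_)
          rw [smul_smul, it_add_apply]
      _ = ∑ i : Fin m,
            (⇑σ)^[s] ((∑ p : Fin m, (⇑σ)^[u - m] (a p) • tred (⇑σ) m a (u - m + (p : ℕ))) i)
              • tred (⇑σ) m a (s + (i : ℕ)) := by
          rw [Finset.sum_comm]
          refine Finset.sum_congr rfl (fun i _ => ?_)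
          rw [Finset.sum_apply, ← Finset.sum_smul]
          congr 1
          rw [iter_eq, map_sum]
          refine Finset.sum_congr rfl (fun p _ => ?_)
          simp [-AlgEquiv.coe_pow, iter_eq, map_mul]
      _ = _ := rfl

lemma it_one (s : ℕ) : (⇑σ)^[s] (1 : K) = 1 := Function.iterate_fixed (map_one σ) s

lemma it_zero (s : ℕ) : (⇑σ)^[s] (0 : K) = 0 := Function.iterate_fixed (map_zero σ) s

lemma it_mul (s : ℕ) (x y : K) : (⇑σ)^[s] (x * y) = (⇑σ)^[s] x * (⇑σ)^[s] y := by
  simp [-AlgEquiv.coe_pow, iter_eq, map_mul]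

lemma it_ne_zero (s : ℕ) {x : K} (hx : x ≠ 0) : (⇑σ)^[s] x ≠ 0 := by
  rw [iter_eq]
  intro h
  exact hx ((σ ^ s).injective (by simpa using h))

-- pmul is additive and K-linear in the first argument
lemma pmul_add_left (x x' y : Fin m → K) :
    pmul (⇑σ) a (x + x') y = pmul (⇑σ) a x y + pmul (⇑σ) a x' y := by
  simp [pmul, add_mul, add_smul, Finset.sum_add_distrib]

lemma pmul_smul_left (c : K) (x y : Fin m → K) :
    pmul (⇑σ) a (c • x) y = c • pmul (⇑σ) a x y := by
  simp [pmul, Finset.smul_sum, smul_smul, mul_assoc]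

lemma pmul_sum_left {ι : Type*} (T : Finset ι) (v : ι → Fin m → K) (y : Fin m → K) :
    pmul (⇑σ) a (∑ t ∈ T, v t) y = ∑ t ∈ T, pmul (⇑σ) a (v t) y :=
  map_sum (AddMonoidHom.mk' (fun x => pmul (⇑σ) a x y) (fun x x' => pmul_add_left σ a x x' y)) v T

lemma pmul_iota_left (hm : 0 < m) (c : K) (y : Fin m → K) :
    pmul (⇑σ) a (iota K m c) y = c • y := by
  unfold pmul iota
  rw [Finset.sum_eq_single (⟨0, hm⟩ : Fin m)]
  · simp only [Fin.val_mk, if_pos rfl, Function.iterate_zero, id_eq, zero_add, if_true]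
    have h2 : ∀ j : Fin m, (c * y j) • tred (⇑σ) m a (j : ℕ)
        = c • (y j • tred (⇑σ) m a (j : ℕ)) := fun j => by rw [smul_smul]
    rw [Finset.sum_congr rfl (fun j _ => h2 j), ← Finset.smul_sum, decomp]
  · intro i _ hi
    have : (i : ℕ) ≠ 0 := by simpa [Fin.ext_iff] using hi
    simp [this]
  · simp

lemma pmul_iota_left' (hm : 0 < m) (c : K) (y : Fin m → K) :
    pmul (⇑σ) a (iota K m c) y = c • y := pmul_iota_left σ a hm c y

lemma pmul_iota_right (x : Fin m → K) (c : K) :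
    pmul (⇑σ) a x (iota K m c) = fun i : Fin m => x i * (⇑σ)^[(i : ℕ)] c := by
  unfold pmul iota
  have h1 : ∀ i : Fin m, ∑ j : Fin m,
      (x i * (⇑σ)^[(i : ℕ)] (if (j : ℕ) = 0 then c else 0)) • tred (⇑σ) m a ((i : ℕ) + (j : ℕ))
      = (x i * (⇑σ)^[(i : ℕ)] c) • tred (⇑σ) m a (i : ℕ) := by
    intro i
    have h0 : (0 : ℕ) < m := lt_of_le_of_lt (Nat.zero_le _) i.isLt
    rw [Finset.sum_eq_single (⟨0, h0⟩ : Fin m)]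
    · simp
    · intro j _ hj
      have : (j : ℕ) ≠ 0 := by simpa [Fin.ext_iff] using hj
      simp [this, it_zero]
    · simp
  rw [Finset.sum_congr rfl (fun i _ => h1 i)]
  exact decomp σ a _

lemma pmul_iota_iota (hm : 0 < m) (c d : K) :
    pmul (⇑σ) a (iota K m c) (iota K m d) = iota K m (c * d) := by
  rw [pmul_iota_left σ a hm]
  funext i
  simp only [iota, Pi.smul_apply, smul_eq_mul, mul_ite, mul_zero]

lemma iota_one : iota K m (1 : K) = pone K m := by
  funext i; simp [iota, pone]

lemma pmul_tvec (hm : 1 < m) (w : Fin m → K) :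
    pmul (⇑σ) a (tvec K m) w = ∑ j : Fin m, σ (w j) • tred (⇑σ) m a (1 + (j : ℕ)) := by
  unfold pmul tvec
  rw [Finset.sum_eq_single (⟨1, hm⟩ : Fin m)]
  · simp
  · intro i _ hi
    have : (i : ℕ) ≠ 1 := by simpa [Fin.ext_iff] using hi
    simp [this]
  · simp

lemma pmul_tvec_tred (hm : 1 < m) {s : ℕ} (hs : s < m) (c : K) :
    pmul (⇑σ) a (tvec K m) (c • tred (⇑σ) m a s) = σ c • tred (⇑σ) m a (1 + s) := by
  rw [pmul_tvec σ a hm, tred_lt σ a hs]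
  rw [Finset.sum_eq_single (⟨s, hs⟩ : Fin m)]
  · simp
  · intro j _ hj
    have : (j : ℕ) ≠ s := by simpa [Fin.ext_iff] using hj
    simp [this]
  · simp

lemma tred_m (hm : 0 < m) : tred (⇑σ) m a m = a := by
  rw [tred_ge σ a (le_refl m)]
  simp only [Nat.sub_self, Function.iterate_zero, id_eq, zero_add]
  exact decomp σ a a

/-- `G u z` is the reduction of `t^u · z` in `S_f`. -/
noncomputable def Gv (σ : K → K) {m : ℕ} (a : Fin m → K) (u : ℕ) (z : Fin m → K) :
    Fin m → K :=
  ∑ l : Fin m, σ^[u] (z l) • tred σ m a (u + (l : ℕ))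

lemma pmul_tred_lt {u : ℕ} (hu : u < m) (z : Fin m → K) :
    pmul (⇑σ) a (tred (⇑σ) m a u) z = Gv (⇑σ) a u z := by
  unfold pmul Gv
  rw [tred_lt σ a hu, Finset.sum_eq_single (⟨u, hu⟩ : Fin m)]
  · simp
  · intro i _ hi
    have : (i : ℕ) ≠ u := by simpa [Fin.ext_iff] using hi
    simp [this]
  · simp

/-- the fundamental "left multiplication by t^c commutes with reduction" identity -/
lemma red_shift {ι : Type*} (T : Finset ι) (w : ι → K) (e : ι → ℕ) (c : ℕ) :
    ∑ t ∈ T, (⇑σ)^[c] (w t) • tred (⇑σ) m a (c + e t)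
      = ∑ i : Fin m, (⇑σ)^[c] ((∑ t ∈ T, w t • tred (⇑σ) m a (e t)) i)
          • tred (⇑σ) m a (c + (i : ℕ)) := by
  calc ∑ t ∈ T, (⇑σ)^[c] (w t) • tred (⇑σ) m a (c + e t)
      = ∑ t ∈ T, ∑ i : Fin m, ((⇑σ)^[c] (w t) * (⇑σ)^[c] (tred (⇑σ) m a (e t) i))
          • tred (⇑σ) m a (c + (i : ℕ)) := by
        refine Finset.sum_congr rfl (fun t _ => ?_)
        rw [tred_shift σ a (e t) c, Finset.smul_sum]
        exact Finset.sum_congr rfl (fun i _ => by rw [smul_smul])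
    _ = ∑ i : Fin m, (⇑σ)^[c] ((∑ t ∈ T, w t • tred (⇑σ) m a (e t)) i)
          • tred (⇑σ) m a (c + (i : ℕ)) := by
        rw [Finset.sum_comm]
        refine Finset.sum_congr rfl (fun i _ => ?_)
        rw [Finset.sum_apply, ← Finset.sum_smul]
        congr 1
        rw [iter_eq, map_sum]
        exact Finset.sum_congr rfl (fun t _ => by simp [-AlgEquiv.coe_pow, iter_eq, map_mul])

lemma pmul_pair (y z : Fin m → K) :
    pmul (⇑σ) a y z = ∑ p : Fin m × Fin m,
      (y p.1 * (⇑σ)^[(p.1 : ℕ)] (z p.2)) • tred (⇑σ) m a ((p.1 : ℕ) + (p.2 : ℕ)) := by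
  rw [← Finset.univ_product_univ, Finset.sum_product]; rfl

lemma A2 (x y z : Fin m → K) :
    pmul (⇑σ) a (pmul (⇑σ) a x y) z
      = ∑ i : Fin m, ∑ j : Fin m, (x i * (⇑σ)^[(i : ℕ)] (y j))
          • pmul (⇑σ) a (tred (⇑σ) m a ((i : ℕ) + (j : ℕ))) z := by
  have hxy : pmul (⇑σ) a x y
      = ∑ i : Fin m, ∑ j : Fin m, (x i * (⇑σ)^[(i : ℕ)] (y j))
          • tred (⇑σ) m a ((i : ℕ) + (j : ℕ)) := rfl
  rw [hxy, pmul_sum_left]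
  refine Finset.sum_congr rfl (fun i _ => ?_)
  rw [pmul_sum_left]
  exact Finset.sum_congr rfl (fun j _ => pmul_smul_left σ a _ _ _)

lemma A1 (x y z : Fin m → K) :
    pmul (⇑σ) a x (pmul (⇑σ) a y z)
      = ∑ i : Fin m, ∑ j : Fin m, (x i * (⇑σ)^[(i : ℕ)] (y j))
          • Gv (⇑σ) a ((i : ℕ) + (j : ℕ)) z := by
  have key : ∀ i : Fin m,
      ∑ k : Fin m, (⇑σ)^[(i : ℕ)] ((pmul (⇑σ) a y z) k) • tred (⇑σ) m a ((i : ℕ) + (k : ℕ))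
      = ∑ p : Fin m × Fin m,
          (⇑σ)^[(i : ℕ)] (y p.1 * (⇑σ)^[(p.1 : ℕ)] (z p.2))
            • tred (⇑σ) m a ((i : ℕ) + ((p.1 : ℕ) + (p.2 : ℕ))) := by
    intro i
    rw [pmul_pair]
    exact (red_shift σ a Finset.univ _ _ (i : ℕ)).symm
  have hL : pmul (⇑σ) a x (pmul (⇑σ) a y z)
      = ∑ i : Fin m, ∑ k : Fin m,
          (x i * (⇑σ)^[(i : ℕ)] ((pmul (⇑σ) a y z) k)) • tred (⇑σ) m a ((i : ℕ) + (k : ℕ)) := rfl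
  rw [hL]
  refine Finset.sum_congr rfl (fun i _ => ?_)
  have l1 : ∑ k : Fin m,
      (x i * (⇑σ)^[(i : ℕ)] ((pmul (⇑σ) a y z) k)) • tred (⇑σ) m a ((i : ℕ) + (k : ℕ))
      = x i • ∑ k : Fin m,
          (⇑σ)^[(i : ℕ)] ((pmul (⇑σ) a y z) k) • tred (⇑σ) m a ((i : ℕ) + (k : ℕ)) := by
    rw [Finset.smul_sum]
    exact Finset.sum_congr rfl (fun k _ => by rw [smul_smul])
  rw [l1, key i]
  rw [← Finset.univ_product_univ, Finset.sum_product, Finset.smul_sum]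
  refine Finset.sum_congr rfl (fun j _ => ?_)
  unfold Gv
  rw [Finset.smul_sum, Finset.smul_sum]
  refine Finset.sum_congr rfl (fun l _ => ?_)
  dsimp only
  rw [smul_smul, smul_smul,
    show (i : ℕ) + ((j : ℕ) + (l : ℕ)) = (i : ℕ) + (j : ℕ) + (l : ℕ) from by omega]
  congr 1
  rw [it_mul, it_add_apply σ (i : ℕ) (j : ℕ) (z l)]
  ring

lemma pmul_tred_eq (hm : 0 < m) (h : ∀ z, pmul (⇑σ) a a z = Gv (⇑σ) a m z) (u : ℕ) :
    ∀ z : Fin m → K, pmul (⇑σ) a (tred (⇑σ) m a u) z = Gv (⇑σ) a u z := by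
  induction u using Nat.strong_induction_on with
  | _ u IH =>
  intro z
  by_cases hu : u < m
  · exact pmul_tred_lt σ a hu z
  · have hmu : m ≤ u := le_of_not_gt hu
    have e1 : pmul (⇑σ) a (tred (⇑σ) m a u) z
        = ∑ i : Fin m, (⇑σ)^[u - m] ((pmul (⇑σ) a a z) i) • tred (⇑σ) m a (u - m + (i : ℕ)) := by
      rw [tred_ge σ a hmu, pmul_sum_left]
      have s1 : ∀ p : Fin m,
          pmul (⇑σ) a ((⇑σ)^[u - m] (a p) • tred (⇑σ) m a (u - m + (p : ℕ))) z
          = ∑ l : Fin m, (⇑σ)^[u - m] (a p * (⇑σ)^[(p : ℕ)] (z l))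
              • tred (⇑σ) m a ((u - m) + ((p : ℕ) + (l : ℕ))) := by
        intro p
        rw [pmul_smul_left, IH (u - m + (p : ℕ)) (by have := p.isLt; omega) z]
        unfold Gv
        rw [Finset.smul_sum]
        refine Finset.sum_congr rfl (fun l _ => ?_)
        rw [show u - m + (p : ℕ) + (l : ℕ) = u - m + ((p : ℕ) + (l : ℕ)) from by omega,
          smul_smul, it_mul, it_add_apply σ (u - m) ((p : ℕ)) (z l)]
      rw [Finset.sum_congr rfl (fun p _ => s1 p)]
      have hrs := red_shift σ a (Finset.univ : Finset (Fin m × Fin m))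
        (fun p => a p.1 * (⇑σ)^[(p.1 : ℕ)] (z p.2))
        (fun p => (p.1 : ℕ) + (p.2 : ℕ)) (u - m)
      rw [pmul_pair σ a a z, ← hrs, ← Finset.univ_product_univ, Finset.sum_product]
    have e2 : Gv (⇑σ) a u z
        = ∑ i : Fin m, (⇑σ)^[u - m] ((Gv (⇑σ) a m z) i) • tred (⇑σ) m a (u - m + (i : ℕ)) := by
      unfold Gv
      have s1 : ∀ l : Fin m, (⇑σ)^[u] (z l) • tred (⇑σ) m a (u + (l : ℕ))
          = (⇑σ)^[u - m] ((⇑σ)^[m] (z l)) • tred (⇑σ) m a ((u - m) + (m + (l : ℕ))) := by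
        intro l
        have h3 : (⇑σ)^[u] (z l) = (⇑σ)^[u - m] ((⇑σ)^[m] (z l)) := by
          rw [← it_add_apply]
          congr 1
          omega
        rw [h3, show u + (l : ℕ) = u - m + (m + (l : ℕ)) from by omega]
      rw [Finset.sum_congr rfl (fun l _ => s1 l)]
      exact red_shift σ a Finset.univ (fun l => (⇑σ)^[m] (z l)) (fun l => m + (l : ℕ)) (u - m)
    rw [e1, e2, h z]

lemma passoc_of (hm : 0 < m) (h : ∀ z, pmul (⇑σ) a a z = Gv (⇑σ) a m z) :
    PAssoc (⇑σ) a := by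
  intro x y z
  rw [A2, A1]
  refine Finset.sum_congr rfl (fun i _ => Finset.sum_congr rfl (fun j _ => ?_))
  rw [pmul_tred_eq σ a hm h]

lemma nuc_to_iota (hm : 2 ≤ m) (hna : ¬ PAssoc (⇑σ) a) (x : Fin m → K)
    (hx : ∀ y z, pmul (⇑σ) a (pmul (⇑σ) a x y) z = pmul (⇑σ) a x (pmul (⇑σ) a y z)) :
    x = iota K m (x ⟨0, by omega⟩) := by
  classical
  by_contra hne
  have hex : ∃ i : Fin m, (i : ℕ) ≠ 0 ∧ x i ≠ 0 := by
    by_contra hno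
    push_neg at hno
    apply hne
    funext i
    by_cases h0 : (i : ℕ) = 0
    · have hi : i = ⟨0, by omega⟩ := Fin.ext h0
      rw [hi]; simp [iota]
    · simp [iota, h0, hno i h0]
  obtain ⟨i0, hi0, hxi0⟩ := hex
  set S := Finset.univ.filter (fun i : Fin m => x i ≠ 0) with hS
  have hSne : S.Nonempty := ⟨i0, by simp [hS, hxi0]⟩
  set d := S.max' hSne with hd
  have hxd : x d ≠ 0 := by have := S.max'_mem hSne; simpa [hS] using this
  have hdle : ∀ i : Fin m, x i ≠ 0 → (i : ℕ) ≤ (d : ℕ) :=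
    fun i hi => S.le_max' i (by simp [hS, hi])
  have hd1 : 1 ≤ (d : ℕ) := le_trans (by omega) (hdle i0 hxi0)
  have hdm := d.isLt
  have key : ∀ z, pmul (⇑σ) a a z = Gv (⇑σ) a m z := by
    intro z
    have h1 := hx (tred (⇑σ) m a (m - (d : ℕ))) z
    rw [A2, A1] at h1
    have hcol : ∀ P : ℕ → Fin m → K,
        ∑ i : Fin m, ∑ j : Fin m,
            (x i * (⇑σ)^[(i : ℕ)] (tred (⇑σ) m a (m - (d : ℕ)) j)) • P ((i : ℕ) + (j : ℕ))
          = ∑ i : Fin m, x i • P ((i : ℕ) + (m - (d : ℕ))) := by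
      intro P
      refine Finset.sum_congr rfl (fun i _ => ?_)
      rw [tred_lt σ a (show m - (d : ℕ) < m by omega)]
      rw [Finset.sum_eq_single (⟨m - (d : ℕ), by omega⟩ : Fin m)]
      · simp [it_one]
      · intro j _ hj
        have : (j : ℕ) ≠ m - (d : ℕ) := by simpa [Fin.ext_iff] using hj
        simp [this, it_zero]
      · simp
    rw [hcol (fun s => pmul (⇑σ) a (tred (⇑σ) m a s) z),
      hcol (fun s => Gv (⇑σ) a s z)] at h1
    have h2 : ∑ i : Fin m,
        x i • (pmul (⇑σ) a (tred (⇑σ) m a ((i : ℕ) + (m - (d : ℕ)))) z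
          - Gv (⇑σ) a ((i : ℕ) + (m - (d : ℕ))) z) = 0 := by
      have : ∀ i : Fin m,
          x i • (pmul (⇑σ) a (tred (⇑σ) m a ((i : ℕ) + (m - (d : ℕ)))) z
            - Gv (⇑σ) a ((i : ℕ) + (m - (d : ℕ))) z)
          = x i • pmul (⇑σ) a (tred (⇑σ) m a ((i : ℕ) + (m - (d : ℕ)))) z
            - x i • Gv (⇑σ) a ((i : ℕ) + (m - (d : ℕ))) z := fun i => smul_sub _ _ _
      rw [Finset.sum_congr rfl (fun i _ => this i), Finset.sum_sub_distrib, h1, sub_self]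
    rw [Finset.sum_eq_single d] at h2
    · have h3 : pmul (⇑σ) a (tred (⇑σ) m a ((d : ℕ) + (m - (d : ℕ)))) z
          - Gv (⇑σ) a ((d : ℕ) + (m - (d : ℕ))) z = 0 := by
        rcases smul_eq_zero.mp h2 with h | h
        · exact absurd h hxd
        · exact h
      have hdm' : (d : ℕ) + (m - (d : ℕ)) = m := by omega
      rw [hdm', sub_eq_zero, tred_m σ a (by omega)] at h3
      exact h3
    · intro i _ hid
      by_cases hxi : x i = 0
      · rw [hxi, zero_smul]
      · have hle := hdle i hxi
        have hlt : (i : ℕ) < (d : ℕ) := by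
          rcases lt_or_eq_of_le hle with h | h
          · exact h
          · exact absurd (Fin.ext h) hid
        rw [pmul_tred_lt σ a (show (i : ℕ) + (m - (d : ℕ)) < m by omega), sub_self, smul_zero]
    · simp
  exact hna (passoc_of σ a (by omega) key)

lemma main_struct [FiniteDimensional F K] (hσ : σ ≠ AlgEquiv.refl)
    (hfix : ∀ x : K, σ x = x ↔ x ∈ Set.range (algebraMap F K))
    (hcomm : ∀ (τ : K ≃ₐ[F] K) (x : K), σ (τ x) = τ (σ x))
    (hm : 2 ≤ m)
    (hna : ¬ PAssoc (⇑σ) a)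
    (ha1 : a ⟨m - 1, Nat.sub_lt (by omega) Nat.one_pos⟩ ∈ Set.range (algebraMap F K))
    (ha2 : a ⟨m - 1, Nat.sub_lt (by omega) Nat.one_pos⟩ ≠ 0)
    (hord : m - 1 ≤ orderOf σ)
    (H : (Fin m → K) → (Fin m → K)) (hH : IsPetitAut (⇑σ) a H) :
    ∃ τ : K ≃ₐ[F] K, H = Hmap (⇑σ) (⇑τ) (1 : K) ∧ ∀ i : Fin m, τ (a i) = a i := by
  classical
  have hm0 : 0 < m := by omega
  have hm1 : 1 < m := by omega
  let Φ : (Fin m → K) →+ (Fin m → K) := AddMonoidHom.mk' H hH.map_add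
  have hH0 : H 0 = 0 := Φ.map_zero
  have hHsum : ∀ (v : Fin m → Fin m → K),
      H (∑ t : Fin m, v t) = ∑ t : Fin m, H (v t) := fun v => map_sum Φ v Finset.univ
  have hiota_nuc : ∀ (c : K) (y z : Fin m → K),
      pmul (⇑σ) a (pmul (⇑σ) a (iota K m c) y) z
        = pmul (⇑σ) a (iota K m c) (pmul (⇑σ) a y z) := by
    intro c y z
    rw [pmul_iota_left σ a hm0, pmul_iota_left σ a hm0, pmul_smul_left]
  set τ0 : K → K := fun c => H (iota K m c) ⟨0, hm0⟩ with hτ0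
  have hHiota : ∀ c, H (iota K m c) = iota K m (τ0 c) := by
    intro c
    apply nuc_to_iota σ a hm hna
    intro y z
    obtain ⟨y', rfl⟩ := hH.bijective.2 y
    obtain ⟨z', rfl⟩ := hH.bijective.2 z
    rw [← hH.map_mul, ← hH.map_mul, ← hH.map_mul, ← hH.map_mul, hiota_nuc]
  have hτadd : ∀ c d, τ0 (c + d) = τ0 c + τ0 d := by
    intro c d
    have hio : iota K m (c + d) = iota K m c + iota K m d := by
      funext i; by_cases h : (i : ℕ) = 0 <;> simp [iota, h]
    have h2 := hH.map_add (iota K m c) (iota K m d)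
    rw [← hio, hHiota, hHiota, hHiota] at h2
    have h3 := congrFun h2 ⟨0, hm0⟩
    simpa [iota] using h3
  have hτmul : ∀ c d, τ0 (c * d) = τ0 c * τ0 d := by
    intro c d
    have h2 := hH.map_mul (iota K m c) (iota K m d)
    rw [pmul_iota_iota σ a hm0, hHiota, hHiota, hHiota, pmul_iota_iota σ a hm0] at h2
    have h3 := congrFun h2 ⟨0, hm0⟩
    simpa [iota] using h3
  have hτone : τ0 1 = 1 := by
    have h2 : H (iota K m 1) = pone K m := by rw [iota_one, hH.map_one]
    rw [hHiota] at h2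
    have h3 := congrFun h2 ⟨0, hm0⟩
    simpa [iota, pone] using h3
  have hτzero : τ0 0 = 0 := by
    have hio : iota K m (0 : K) = 0 := by funext i; simp [iota]
    have h2 : H (iota K m 0) = 0 := by rw [hio, hH0]
    rw [hHiota] at h2
    have h3 := congrFun h2 ⟨0, hm0⟩
    simpa [iota] using h3
  have hτinj : Function.Injective τ0 := by
    intro c d hcd
    have h1 : H (iota K m c) = H (iota K m d) := by rw [hHiota, hHiota, hcd]
    have h2 := hH.bijective.1 h1
    have h3 := congrFun h2 ⟨0, hm0⟩
    simpa [iota] using h3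
  have hτsurj : Function.Surjective τ0 := by
    intro dd
    obtain ⟨x, hxd⟩ := hH.bijective.2 (iota K m dd)
    have hxn : x = iota K m (x ⟨0, by omega⟩) := by
      apply nuc_to_iota σ a hm hna
      intro y z
      apply hH.bijective.1
      rw [hH.map_mul, hH.map_mul, hH.map_mul, hH.map_mul, hxd, hiota_nuc]
    refine ⟨x ⟨0, by omega⟩, ?_⟩
    have h1 : H (iota K m (x ⟨0, by omega⟩)) = iota K m dd := by rw [← hxn, hxd]
    rw [hHiota] at h1
    have h3 := congrFun h1 ⟨0, hm0⟩
    simpa [iota] using h3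
  have hτfix : ∀ r : F, τ0 (algebraMap F K r) = algebraMap F K r := by
    intro r
    have hc : σ (algebraMap F K r) = algebraMap F K r := (hfix _).mpr ⟨r, rfl⟩
    have hio : iota K m (algebraMap F K r) = (algebraMap F K r) • pone K m := by
      funext i; by_cases h : (i : ℕ) = 0 <;> simp [iota, pone, h]
    have h2 : H (iota K m (algebraMap F K r)) = iota K m (algebraMap F K r) := by
      rw [hio, hH.map_smul _ hc, hH.map_one, ← hio]
    rw [hHiota] at h2
    have h3 := congrFun h2 ⟨0, hm0⟩
    simpa [iota] using h3
  let τA : K →ₐ[F] K :=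
    { toFun := τ0, map_one' := hτone, map_mul' := hτmul, map_zero' := hτzero,
      map_add' := hτadd, commutes' := hτfix }
  let τ : K ≃ₐ[F] K := AlgEquiv.ofBijective τA ⟨hτinj, hτsurj⟩
  have hτc : ⇑τ = τ0 := rfl
  set b := H (tvec K m) with hb
  have hbrel : ∀ (c : K) (i : Fin m), b i * (⇑σ)^[(i : ℕ)] (τ0 c) = τ0 (σ c) * b i := by
    intro c i
    have e1 : pmul (⇑σ) a (tvec K m) (iota K m c) = σ c • tvec K m := by
      rw [pmul_iota_right]
      funext j
      by_cases h : (j : ℕ) = 1 <;> simp [tvec, h]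
    have e2 : pmul (⇑σ) a (iota K m (σ c)) (tvec K m) = σ c • tvec K m :=
      pmul_iota_left σ a hm0 _ _
    have h2 := congrArg H (e1.trans e2.symm)
    rw [hH.map_mul, hH.map_mul, hHiota, hHiota, ← hb, pmul_iota_right,
      pmul_iota_left σ a hm0] at h2
    have h3 := congrFun h2 i
    simpa using h3
  have hbzero : ∀ i : Fin m, (i : ℕ) ≠ 1 → b i = 0 := by
    intro i hi1
    by_contra hbi
    have hcan : ∀ c : K, (⇑σ)^[(i : ℕ)] (τ0 c) = τ0 (σ c) := by
      intro c
      have h1 := hbrel c i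
      rw [mul_comm (τ0 (σ c)) (b i)] at h1
      exact mul_left_cancel₀ hbi h1
    rcases Nat.eq_zero_or_pos (i : ℕ) with h0 | hpos
    · have hσid : ∀ c, σ c = c := by
        intro c
        have h1 := hcan c
        rw [h0] at h1
        simp only [Function.iterate_zero, id_eq] at h1
        exact (hτinj h1).symm
      exact hσ (AlgEquiv.ext fun c => by simp [hσid c])
    · have hi2 : 2 ≤ (i : ℕ) := by omega
      have hsd : ∀ dd : K, (⇑σ)^[(i : ℕ)] dd = σ dd := by
        intro dd
        obtain ⟨c, rfl⟩ := hτsurj dd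
        rw [hcan c]
        exact (hcomm τ c).symm
      have hpow : σ ^ ((i : ℕ) - 1) = 1 := by
        apply AlgEquiv.ext
        intro dd
        have h1 : (⇑σ)^[(i : ℕ)] dd = σ ((⇑σ)^[(i : ℕ) - 1] dd) := by
          rw [← Function.iterate_succ_apply' (⇑σ) ((i : ℕ) - 1) dd]
          congr 1
          omega
        have h2 : σ ((⇑σ)^[(i : ℕ) - 1] dd) = σ dd := by rw [← h1, hsd]
        have h3 := σ.injective h2
        rw [iter_eq] at h3
        simpa using h3
      have hdvd := orderOf_dvd_of_pow_eq_one hpow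
      have hle := Nat.le_of_dvd (by omega) hdvd
      have him := i.isLt
      omega
  set k := b ⟨1, hm1⟩ with hk
  have hbk : b = k • tvec K m := by
    funext i
    by_cases h1 : (i : ℕ) = 1
    · have hi : i = ⟨1, hm1⟩ := Fin.ext h1
      rw [hi]; simp [tvec]; exact hk.symm
    · rw [hbzero i h1]; simp [tvec, h1]
  have hk0 : k ≠ 0 := by
    intro hk0'
    have hb0 : b = 0 := by rw [hbk, hk0', zero_smul]
    have h1 := hH.bijective.1 (show H (tvec K m) = H 0 by rw [← hb, hb0, hH0])
    have h2 := congrFun h1 ⟨1, hm1⟩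
    simp [tvec] at h2
  have hsemi : ∀ (c : K) (x : Fin m → K), H (c • x) = τ0 c • H x := by
    intro c x
    rw [← pmul_iota_left σ a hm0 c x, hH.map_mul, hHiota, pmul_iota_left σ a hm0]
  have htred : ∀ n, n < m →
      H (tred (⇑σ) m a n) = (∏ l ∈ Finset.range n, (⇑σ)^[l] k) • tred (⇑σ) m a n := by
    intro n
    induction n with
    | zero =>
      intro h
      have h0 : tred (⇑σ) m a 0 = pone K m := by
        rw [tred_lt σ a h]; funext i; simp [pone]
      rw [h0, hH.map_one]; simp
    | succ n ih =>
      intro h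
      have hn : n < m := by omega
      have e1 : pmul (⇑σ) a (tvec K m) (tred (⇑σ) m a n) = tred (⇑σ) m a (n + 1) := by
        have h1 := pmul_tvec_tred σ a hm1 hn (1 : K)
        rw [one_smul, map_one, one_smul, show 1 + n = n + 1 from by omega] at h1
        exact h1
      conv_lhs => rw [← e1]
      rw [hH.map_mul, ← hb, hbk, ih hn, pmul_smul_left,
        pmul_tvec_tred σ a hm1 hn, smul_smul, show 1 + n = n + 1 from by omega]
      congr 1
      have hs : σ (∏ l ∈ Finset.range n, (⇑σ)^[l] k)
          = ∏ l ∈ Finset.range n, (⇑σ)^[l + 1] k := by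
        rw [map_prod]
        exact Finset.prod_congr rfl fun l _ => (Function.iterate_succ_apply' (⇑σ) l k).symm
      rw [hs, Finset.prod_range_succ']
      simp only [Function.iterate_zero, id_eq]
      ring
  have hHeq : H = Hmap (⇑σ) τ0 k := by
    funext x
    have h1 : H x = ∑ i : Fin m,
        τ0 (x i) • ((∏ l ∈ Finset.range (i : ℕ), (⇑σ)^[l] k) • tred (⇑σ) m a (i : ℕ)) := by
      conv_lhs => rw [← decomp σ a x]
      rw [hHsum]
      exact Finset.sum_congr rfl fun i _ => by rw [hsemi, htred (i : ℕ) i.isLt]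
    rw [h1]
    funext j
    rw [Finset.sum_apply, Finset.sum_eq_single j]
    · simp [Hmap, tred_lt σ a j.isLt, smul_smul]
    · intro i _ hij
      have : (j : ℕ) ≠ (i : ℕ) := by simp [Fin.val_eq_val, Ne.symm hij]
      simp [tred_lt σ a i.isLt, this]
    · simp
  have hmm1 : m - 1 < m := by omega
  have hQne : (∏ l ∈ Finset.range (m - 1), (⇑σ)^[l] k) ≠ 0 :=
    Finset.prod_ne_zero_iff.mpr fun l _ => it_ne_zero σ l hk0
  have hrel : pmul (⇑σ) a (tvec K m) (tred (⇑σ) m a (m - 1)) = a := by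
    have h1 := pmul_tvec_tred σ a hm1 hmm1 (1 : K)
    rw [one_smul, map_one, one_smul, show 1 + (m - 1) = m from by omega, tred_m σ a hm0] at h1
    exact h1
  have hHa : H a = (∏ l ∈ Finset.range m, (⇑σ)^[l] k) • a := by
    conv_lhs => rw [← hrel]
    rw [hH.map_mul, ← hb, hbk, htred (m - 1) hmm1, pmul_smul_left,
      pmul_tvec_tred σ a hm1 hmm1, smul_smul,
      show 1 + (m - 1) = m from by omega, tred_m σ a hm0]
    congr 1
    have hs : σ (∏ l ∈ Finset.range (m - 1), (⇑σ)^[l] k)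
        = ∏ l ∈ Finset.range (m - 1), (⇑σ)^[l + 1] k := by
      rw [map_prod]
      exact Finset.prod_congr rfl fun l _ => (Function.iterate_succ_apply' (⇑σ) l k).symm
    rw [hs]
    conv_rhs => rw [show m = (m - 1) + 1 from by omega, Finset.prod_range_succ']
    simp only [Function.iterate_zero, id_eq]
    ring
  have hk1 : k = 1 := by
    have h1 : Hmap (⇑σ) τ0 k a ⟨m - 1, hmm1⟩
        = (∏ l ∈ Finset.range m, (⇑σ)^[l] k) * a ⟨m - 1, hmm1⟩ := by
      rw [← hHeq]
      exact congrFun hHa ⟨m - 1, hmm1⟩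
    obtain ⟨r, hr⟩ := ha1
    have hfixa : τ0 (a ⟨m - 1, hmm1⟩) = a ⟨m - 1, hmm1⟩ := by
      have : a ⟨m - 1, by omega⟩ = algebraMap F K r := hr.symm
      rw [show (⟨m - 1, hmm1⟩ : Fin m) = ⟨m - 1, by omega⟩ from rfl, this]
      exact hτfix r
    have h2 : τ0 (a ⟨m - 1, hmm1⟩) * ∏ l ∈ Finset.range (m - 1), (⇑σ)^[l] k
        = (∏ l ∈ Finset.range m, (⇑σ)^[l] k) * a ⟨m - 1, hmm1⟩ := h1
    rw [hfixa] at h2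
    have h3 : (∏ l ∈ Finset.range m, (⇑σ)^[l] k)
        = (∏ l ∈ Finset.range (m - 1), (⇑σ)^[l] k) * (⇑σ)^[m - 1] k := by
      conv_lhs => rw [show m = (m - 1) + 1 from by omega, Finset.prod_range_succ]
    rw [h3] at h2
    have h4 : (⇑σ)^[m - 1] k = 1 := by
      have h5 : (∏ l ∈ Finset.range (m - 1), (⇑σ)^[l] k) * a ⟨m - 1, hmm1⟩ * ((⇑σ)^[m - 1] k)
          = (∏ l ∈ Finset.range (m - 1), (⇑σ)^[l] k) * a ⟨m - 1, hmm1⟩ * 1 := by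
        rw [mul_one]
        linear_combination -h2
      exact mul_left_cancel₀ (mul_ne_zero hQne ha2) h5
    have h6 : (⇑σ)^[m - 1] k = (⇑σ)^[m - 1] 1 := by rw [h4, it_one]
    rw [iter_eq, iter_eq] at h6
    exact (σ ^ (m - 1)).injective h6
  rw [hk1] at hHeq hHa
  have hτa : ∀ i : Fin m, τ0 (a i) = a i := by
    intro i
    have h1 := congrFun hHa i
    rw [hHeq] at h1
    simp only [Hmap, it_one, Finset.prod_const_one, mul_one, Pi.smul_apply, smul_eq_mul,
      one_mul] at h1
    exact h1
  exact ⟨τ, by rw [hHeq, hτc], hτa⟩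

lemma comm_iter (τ : K ≃ₐ[F] K) (hc : ∀ x : K, σ (τ x) = τ (σ x)) (s : ℕ) (x : K) :
    (⇑σ)^[s] (τ x) = τ ((⇑σ)^[s] x) := by
  induction s generalizing x with
  | zero => simp
  | succ n ih =>
    rw [Function.iterate_succ_apply, Function.iterate_succ_apply, hc, ih]

lemma tau_fix_tred (τ : K ≃ₐ[F] K) (hc : ∀ x : K, σ (τ x) = τ (σ x))
    (hτa : ∀ i : Fin m, τ (a i) = a i) (s : ℕ) (n : Fin m) :
    τ (tred (⇑σ) m a s n) = tred (⇑σ) m a s n := by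
  induction s using Nat.strong_induction_on with
  | _ s IH =>
  by_cases hs : s < m
  · rw [tred_lt σ a hs]
    by_cases h : (n : ℕ) = s <;> simp [h]
  · rw [tred_ge σ a (le_of_not_gt hs), Finset.sum_apply]
    rw [map_sum]
    refine Finset.sum_congr rfl (fun p _ => ?_)
    rw [Pi.smul_apply, smul_eq_mul, map_mul, ← comm_iter σ τ hc, hτa p,
      IH (s - m + (p : ℕ)) (by have := p.isLt; omega)]

lemma Hmap_one_apply (τ : K → K) (x : Fin m → K) (i : Fin m) :
    Hmap (⇑σ) τ (1 : K) x i = τ (x i) := by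
  simp [Hmap, it_one]

lemma isAut_Hmap (hfix : ∀ x : K, σ x = x ↔ x ∈ Set.range (algebraMap F K))
    (τ : K ≃ₐ[F] K) (hc : ∀ x : K, σ (τ x) = τ (σ x))
    (hτa : ∀ i : Fin m, τ (a i) = a i) :
    IsPetitAut (⇑σ) a (Hmap (⇑σ) (⇑τ) (1 : K)) := by
  constructor
  · rw [Function.bijective_iff_has_inverse]
    refine ⟨Hmap (⇑σ) (⇑τ.symm) (1 : K), fun x => ?_, fun x => ?_⟩ <;>
      (funext i; rw [Hmap_one_apply, Hmap_one_apply]; simp)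
  · intro x y
    funext i
    rw [Hmap_one_apply, Pi.add_apply, Pi.add_apply, Hmap_one_apply, Hmap_one_apply, map_add]
  · intro c hc' x
    obtain ⟨r, hr⟩ := (hfix c).mp hc'
    funext i
    rw [Pi.smul_apply, Hmap_one_apply, Pi.smul_apply, Hmap_one_apply, smul_eq_mul,
      smul_eq_mul, map_mul, ← hr, AlgEquiv.commutes]
  · intro x y
    funext n
    rw [Hmap_one_apply]
    unfold pmul
    rw [Finset.sum_apply, Finset.sum_apply, map_sum]
    refine Finset.sum_congr rfl (fun i _ => ?_)
    rw [Finset.sum_apply, Finset.sum_apply, map_sum]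
    refine Finset.sum_congr rfl (fun j _ => ?_)
    rw [Pi.smul_apply, Pi.smul_apply, smul_eq_mul, smul_eq_mul, map_mul, map_mul,
      tau_fix_tred σ a τ hc hτa, Hmap_one_apply, Hmap_one_apply, comm_iter σ τ hc]
  · funext i
    rw [Hmap_one_apply]
    unfold pone
    by_cases h : (i : ℕ) = 0 <;> simp [h]

end AuxPetit

/-- **Theorem 3.4.** Let `K/F` be finite Galois, `σ ∈ Gal(K/F)` of order `n ≥ m − 1`
with `Fix(σ) = F`, commuting with every `τ ∈ Gal(K/F)`; let `f = t^m − Σ a_i t^i` be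
not invariant (equivalently `S_f` not associative) with `a_{m−1} ∈ F^×`.
(1) If for every `τ ≠ id` there is an index `i ≠ m−1` with `a_i ≠ 0` and
`τ(a_i) ≠ a_i`, then `Aut_F(S_f) = {id}`.
(2) If all coefficients of `f` lie in `F`, then the automorphisms of `S_f` are exactly
the maps `H_{τ,1}`, `τ ∈ Gal(K/F)`, and `Aut_F(S_f) ≅ Gal(K/F)`. -/
theorem stmt10 {F K : Type*} [Field F] [Field K] [Algebra F K]
    [FiniteDimensional F K] [IsGalois F K]
    (σ : K ≃ₐ[F] K) (hσ : σ ≠ AlgEquiv.refl)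
    (hfix : ∀ x : K, σ x = x ↔ x ∈ Set.range (algebraMap F K))
    (hcomm : ∀ (τ : K ≃ₐ[F] K) (x : K), σ (τ x) = τ (σ x))
    (m : ℕ) (hm : 2 ≤ m) (a : Fin m → K)
    (hna : ¬ PAssoc (⇑σ) a)
    (ha1 : a ⟨m - 1, by omega⟩ ∈ Set.range (algebraMap F K))
    (ha2 : a ⟨m - 1, by omega⟩ ≠ 0)
    (hord : m - 1 ≤ orderOf σ) :
    ((∀ τ : K ≃ₐ[F] K, τ ≠ AlgEquiv.refl →
        ∃ i : Fin m, (i : ℕ) ≠ m - 1 ∧ a i ≠ 0 ∧ τ (a i) ≠ a i) →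
      ∀ H : (Fin m → K) → (Fin m → K), IsPetitAut (⇑σ) a H ↔ H = id)
    ∧ ((∀ i : Fin m, a i ∈ Set.range (algebraMap F K)) →
      (∀ H : (Fin m → K) → (Fin m → K),
        IsPetitAut (⇑σ) a H ↔ ∃ τ : K ≃ₐ[F] K, H = Hmap (⇑σ) (⇑τ) (1 : K))
      ∧ (∀ τ ρ : K ≃ₐ[F] K,
          (Hmap (⇑σ) (⇑τ) (1 : K) : (Fin m → K) → Fin m → K) ∘ Hmap (⇑σ) (⇑ρ) (1 : K)
            = Hmap (⇑σ) (⇑(τ * ρ)) (1 : K))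
      ∧ Function.Injective
          (fun τ : K ≃ₐ[F] K => (Hmap (⇑σ) (⇑τ) (1 : K) : (Fin m → K) → Fin m → K))) := by
  have hm0 : 0 < m := by omega
  constructor
  · intro hyp H
    constructor
    · intro hH
      obtain ⟨τ, hHeq, hτa⟩ := main_struct σ a hσ hfix hcomm hm hna ha1 ha2 hord H hH
      have hτ : τ = AlgEquiv.refl := by
        by_contra hne
        obtain ⟨i, _, _, hnefix⟩ := hyp τ hne
        exact hnefix (hτa i)
      rw [hHeq, hτ]
      funext x i
      rw [Hmap_one_apply]
      rfl
    · rintro rfl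
      have hid : Hmap (⇑σ) (⇑(AlgEquiv.refl : K ≃ₐ[F] K)) (1 : K)
          = (id : (Fin m → K) → Fin m → K) := by
        funext x i
        rw [Hmap_one_apply]
        rfl
      have h2 := isAut_Hmap σ a hfix AlgEquiv.refl (fun x => rfl) (fun i => rfl)
      rwa [hid] at h2
  · intro hfa
    refine ⟨fun H => ⟨?_, ?_⟩, ?_, ?_⟩
    · intro hH
      obtain ⟨τ, hHeq, _⟩ := main_struct σ a hσ hfix hcomm hm hna ha1 ha2 hord H hH
      exact ⟨τ, hHeq⟩
    · rintro ⟨τ, rfl⟩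
      exact isAut_Hmap σ a hfix τ (hcomm τ) (fun i => by
        obtain ⟨r, hr⟩ := hfa i; rw [← hr]; exact τ.commutes r)
    · intro τ ρ
      funext x i
      simp only [Function.comp_apply]
      rw [Hmap_one_apply, Hmap_one_apply, Hmap_one_apply]
      rfl
    · intro τ ρ h
      apply AlgEquiv.ext
      intro c
      have h1 := congrFun (congrFun h (fun _ => c)) ⟨0, hm0⟩
      dsimp only at h1
      rw [Hmap_one_apply, Hmap_one_apply] at h1
      exact h1
end

section
/- Let K/F be a finite Galois field extension, σ ∈ Gal(K/F) with Fix(σ) = F, and suppose F contains an s-th root of unity ω. Suppose either f(t) = t^s − a ∈ K[t;σ] with a ∈ K∖F, or f(t) = t^{sl} − Σ_{i=0}^{l−1} a_{is} t^{is} ∈ K[t;σ] with S_f not associative. Then the maps H_{id,ω^j} for 0 ≤ j ≤ s−1 are F-algebra automorphisms of S_f, and ⟨H_{id,ω}⟩ is a cyclic subgroup of Aut_F(S_f) of order at most s; if ω is a primitive s-th root of unity, its order is exactly s. -/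
section Aux514
set_option linter.unusedSectionVars false
variable {K : Type*} [Field K]

lemma iterate_fix514 (σ : K → K) {k : K} (h : σ k = k) (n : ℕ) : σ^[n] k = k := by
  induction n with
  | zero => rfl
  | succ n ih => rw [Function.iterate_succ_apply', ih, h]

lemma Hmap_diag514 (σ : K → K) {m : ℕ} {k : K} (h : σ k = k) (x : Fin m → K) :
    Hmap σ (id : K → K) k x = fun i => x i * k ^ (i : ℕ) := by
  funext i
  simp only [Hmap, id_eq]
  rw [Finset.prod_congr rfl (fun l _ => iterate_fix514 σ h l), Finset.prod_const,
    Finset.card_range]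

lemma tred_mod514 (σ : K → K) (hσ0 : σ 0 = 0) {m s : ℕ} (hm : s ∣ m)
    (a : Fin m → K) (ha : ∀ i : Fin m, a i ≠ 0 → s ∣ (i : ℕ)) :
    ∀ u (n : Fin m), tred σ m a u n ≠ 0 → u % s = (n : ℕ) % s := by
  intro u
  induction u using Nat.strong_induction_on with
  | _ u ih =>
    intro n hn
    rw [tred] at hn
    by_cases h : u < m
    · rw [dif_pos h] at hn
      simp only [ne_eq, ite_eq_right_iff, one_ne_zero, imp_false, not_not] at hn
      rw [hn]
    · rw [dif_neg h] at hn
      rw [Finset.sum_apply] at hn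
      obtain ⟨i, -, hi⟩ := Finset.exists_ne_zero_of_sum_ne_zero hn
      simp only [Pi.smul_apply, smul_eq_mul, ne_eq, mul_eq_zero, not_or] at hi
      obtain ⟨h1, h2⟩ := hi
      have hai : a i ≠ 0 := by
        intro h0
        exact h1 (by rw [h0, iterate_fix514 σ hσ0])
      obtain ⟨ci, hci⟩ := ha i hai
      obtain ⟨b, hb⟩ := hm
      have hlt : u - m + (i : ℕ) < u := by
        have := i.isLt
        omega
      have := ih _ hlt n h2
      rw [← this, hci]
      have hum : u = (u - m) + s * b := by omega
      conv_lhs => rw [hum]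
      rw [Nat.add_mul_mod_self_left, Nat.add_mul_mod_self_left]

lemma pow_eq_pow_of_mod514 {k : K} {s : ℕ} (hk : k ^ s = 1) {u n : ℕ}
    (h : u % s = n % s) : k ^ u = k ^ n := by
  have e : ∀ w : ℕ, k ^ w = k ^ (w % s) := by
    intro w
    conv_lhs => rw [← Nat.mod_add_div w s]
    rw [pow_add, pow_mul, hk, one_pow, mul_one]
  rw [e u, e n, h]

end Aux514

/-- **Theorem 5.1.** Let `K/F` be finite Galois, `σ ∈ Gal(K/F)` with `Fix(σ) = F`,
and suppose `F` contains an `s`-th root of unity `ω`.  Suppose either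
`f(t) = t^s − a` with `a ∈ K∖F`, or `f(t) = t^{sl} − Σ_{i<l} a_{is} t^{is}` with `S_f`
not associative.  Then the maps `H_{id,ω^j}` are automorphisms of `S_f` and
`⟨H_{id,ω}⟩` is a cyclic subgroup of `Aut_F(S_f)` of order at most `s`, of order
exactly `s` when `ω` is a primitive `s`-th root of unity. -/
theorem stmt14 {F K : Type*} [Field F] [Field K] [Algebra F K]
    [FiniteDimensional F K] [IsGalois F K]
    (σ : K ≃ₐ[F] K) (hσ : σ ≠ AlgEquiv.refl)
    (hfix : ∀ x : K, σ x = x ↔ x ∈ Set.range (algebraMap F K))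
    (s : ℕ) (hs : 0 < s) (ω : F) (hω : ω ^ s = 1)
    (m : ℕ) (a : Fin m → K)
    (hcase :
      (m = s ∧ ∃ aa : K, aa ∉ Set.range (algebraMap F K) ∧
        a = fun i : Fin m => if (i : ℕ) = 0 then aa else 0) ∨
      (∃ l : ℕ, m = s * l ∧ (∀ i : Fin m, a i ≠ 0 → s ∣ (i : ℕ)) ∧ ¬ PAssoc (⇑σ) a)) :
    (∀ j : ℕ, j ≤ s - 1 →
      IsPetitAut (⇑σ) a (Hmap (⇑σ) (id : K → K) (algebraMap F K ω ^ j)))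
    ∧ (∀ j r : ℕ,
        (Hmap (⇑σ) (id : K → K) (algebraMap F K ω ^ j) : (Fin m → K) → Fin m → K) ∘
          Hmap (⇑σ) (id : K → K) (algebraMap F K ω ^ r)
          = Hmap (⇑σ) (id : K → K) (algebraMap F K ω ^ (j + r)))
    ∧ ((Hmap (⇑σ) (id : K → K) (algebraMap F K ω) : (Fin m → K) → Fin m → K)^[s] = id)
    ∧ (IsPrimitiveRoot ω s → ∀ j : ℕ, 0 < j → j < s →
        (Hmap (⇑σ) (id : K → K) (algebraMap F K ω) : (Fin m → K) → Fin m → K)^[j] ≠ id) := by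
  set c : K := algebraMap F K ω with hcdef
  have hc : σ c = c := (hfix c).mpr ⟨ω, rfl⟩
  have hcs : c ^ s = 1 := by
    rw [hcdef, ← map_pow, hω, map_one]
  -- structural hypotheses
  have hdvd : s ∣ m ∧ ∀ i : Fin m, a i ≠ 0 → s ∣ (i : ℕ) := by
    rcases hcase with ⟨hm, aa, -, haa⟩ | ⟨l, hm, ha, -⟩
    · refine ⟨hm ▸ dvd_refl s, fun i hi => ?_⟩
      rw [haa] at hi
      by_cases h0 : (i : ℕ) = 0
      · rw [h0]; exact dvd_zero s
      · simp [h0] at hi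
    · exact ⟨hm ▸ Dvd.intro l rfl, ha⟩
  have hσ0 : σ (0 : K) = 0 := map_zero σ
  have key : ∀ (u : ℕ) (n : Fin m), tred (⇑σ) m a u n ≠ 0 → u % s = (n : ℕ) % s :=
    tred_mod514 (⇑σ) hσ0 hdvd.1 a hdvd.2
  have hHj : ∀ (k : K), σ k = k → k ^ s = 1 →
      IsPetitAut (⇑σ) a (Hmap (⇑σ) (id : K → K) k) := by
    intro k hk hks
    have hk0 : k ≠ 0 := by
      intro h0
      rw [h0, zero_pow hs.ne'] at hks
      exact zero_ne_one hks
    have hdiag := Hmap_diag514 (m := m) (⇑σ) hk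
    constructor
    · -- bijective
      apply Function.bijective_iff_has_inverse.mpr
      refine ⟨fun x i => x i * (k ^ (i : ℕ))⁻¹, fun x => ?_, fun x => ?_⟩ <;>
      · rw [hdiag]
        funext i
        field_simp
    · intro x y
      funext i
      simp [Hmap, add_mul]
    · intro cc _ x
      funext i
      simp [Hmap, mul_assoc]
    · -- map_mul
      intro x y
      rw [hdiag, hdiag, hdiag]
      funext n
      simp only [pmul, Finset.sum_apply, Pi.smul_apply, smul_eq_mul, Finset.sum_mul]
      refine Finset.sum_congr rfl fun i _ => ?_
      refine Finset.sum_congr rfl fun j _ => ?_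
      have hiter : ∀ (p : ℕ) (z : K), (⇑σ)^[p] (z * k ^ (j : ℕ)) =
          (⇑σ)^[p] z * k ^ (j : ℕ) := by
        intro p
        induction p with
        | zero => intro z; rfl
        | succ p ih =>
          intro z
          rw [Function.iterate_succ_apply', Function.iterate_succ_apply', ih,
            map_mul]
          congr 1
          rw [map_pow, hk]
      rw [hiter]
      by_cases ht : tred (⇑σ) m a ((i : ℕ) + (j : ℕ)) n = 0
      · rw [ht]; ring
      · have := key _ n ht
        have hkn : k ^ (n : ℕ) = k ^ ((i : ℕ) + (j : ℕ)) :=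
          pow_eq_pow_of_mod514 hks this.symm
        rw [hkn, pow_add]
        ring
    · -- map_one
      rw [hdiag]
      funext i
      by_cases h0 : (i : ℕ) = 0 <;> simp [pone, h0]
  have hcjfix : ∀ j : ℕ, σ (c ^ j) = c ^ j := by
    intro j
    rw [map_pow, hc]
  have hcjpow : ∀ j : ℕ, (c ^ j) ^ s = 1 := by
    intro j
    rw [← pow_mul, mul_comm, pow_mul, hcs, one_pow]
  have hIpow : ∀ (p : ℕ) (x : Fin m → K),
      (Hmap (⇑σ) (id : K → K) c : (Fin m → K) → Fin m → K)^[p] x =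
        fun i => x i * c ^ ((i : ℕ) * p) := by
    intro p
    induction p with
    | zero => intro x; funext i; simp
    | succ p ih =>
      intro x
      rw [Function.iterate_succ_apply', ih, Hmap_diag514 (⇑σ) hc]
      funext i
      show x i * c ^ ((i : ℕ) * p) * c ^ (i : ℕ) = x i * c ^ ((i : ℕ) * (p + 1))
      rw [show (i : ℕ) * (p + 1) = (i : ℕ) * p + (i : ℕ) by ring, pow_add, mul_assoc]
  refine ⟨fun j _ => hHj (c ^ j) (hcjfix j) (hcjpow j), ?_, ?_, ?_⟩
  · -- composition
    intro j r
    funext x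
    rw [Function.comp_apply, Hmap_diag514 (⇑σ) (hcjfix r),
      Hmap_diag514 (⇑σ) (hcjfix j), Hmap_diag514 (⇑σ) (hcjfix (j + r))]
    funext i
    show x i * (c ^ r) ^ (i : ℕ) * (c ^ j) ^ (i : ℕ) = x i * (c ^ (j + r)) ^ (i : ℕ)
    rw [pow_add, mul_pow, mul_assoc, mul_comm ((c ^ j) ^ (i : ℕ))]
  · -- order at most s
    funext x
    rw [hIpow]
    funext i
    show x i * c ^ ((i : ℕ) * s) = x i
    rw [mul_comm (i : ℕ) s, pow_mul, hcs, one_pow, mul_one]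
  · -- order exactly s
    intro hprim j hj0 hjs
    have hm2 : 2 ≤ m := by
      rcases hcase with ⟨hm, -⟩ | ⟨l, hm, -, hna⟩
      · omega
      · rcases Nat.eq_zero_or_pos l with hl | hl
        · exfalso
          apply hna
          rw [hl, mul_zero] at hm
          subst hm
          intro x y z
          funext i
          exact i.elim0
        · have : s ≤ m := hm ▸ Nat.le_mul_of_pos_right s hl
          omega
    intro heq
    have hx := congrFun heq (fun _ => (1 : K))
    rw [hIpow] at hx
    have hx1 := congrFun hx ⟨1, by omega⟩
    have hcj : c ^ j = 1 := by simpa using hx1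
    have hcprim : IsPrimitiveRoot c s :=
      hprim.map_of_injective (algebraMap F K).injective
    have hdj : s ∣ j := hcprim.dvd_of_pow_eq_one j hcj
    have := Nat.le_of_dvd hj0 hdj
    omega
end
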